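/- Fix k ≥ 1, points x₀, x_k ∈ dom Ψ, points u_1,…,u_k ∈ dom Ψ, and scalars a_1,…,a_k ≥ 0 with A_k := Σ_{i=1}^k a_i > 0. Define ψ_k(x) := Δ(x, x₀) + Σ_{i=1}^k a_i [Ψ(x) + ℓ_f(x; u_i, λ1)]. If A_k J(x_k) ≤ inf_{x ∈ E} ψ_k(x), then for every x ∈ dom Ψ, J(x_k) − J(x) ≤ Δ(x, x₀) / A_k. -/

import Mathlib

noncomputable section

open scoped BigOperators

/-- Bregman divergence induced by `d`. -/
def breg {E : Type*} [NormedAddCommGroup E] [NormedSpace ℝ E]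
    (d : E → ℝ) (x y : E) : ℝ :=
  d x - d y - fderiv ℝ d y (x - y)

/-- `d` is `σ`-strongly convex with respect to the norm `‖·‖`. -/
def StrongConvexOnNorm {E : Type*} [NormedAddCommGroup E] [NormedSpace ℝ E]
    (σ : ℝ) (d : E → ℝ) : Prop :=
  ∀ x y : E, d x ≥ d y + fderiv ℝ d y (x - y) + σ / 2 * ‖x - y‖ ^ 2

/-- `g` is a subgradient of the extended-real-valued function `h` at `y`. -/
def IsSubgradE {E : Type*} [NormedAddCommGroup E] [NormedSpace ℝ E]
    (h : E → EReal) (y : E) (g : E →L[ℝ] ℝ) : Prop :=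
  ∀ x, h x ≥ h y + ((g (x - y) : ℝ) : EReal)

/-- `h` is `lam`-strongly convex with respect to `d` (extended-real-valued version). -/
def ScWrtE {E : Type*} [NormedAddCommGroup E] [NormedSpace ℝ E]
    (d : E → ℝ) (lam : ℝ) (h : E → EReal) : Prop :=
  ∀ y : E, h y ≠ ⊤ → ∀ g : E →L[ℝ] ℝ, IsSubgradE h y g →
    ∀ x, h x ≥ h y + ((g (x - y) + lam * breg d x y : ℝ) : EReal)

/-- `f` is `lam`-strongly convex with respect to `d` (real-valued version). -/
def ScWrtR {E : Type*} [NormedAddCommGroup E] [NormedSpace ℝ E]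
    (d : E → ℝ) (lam : ℝ) (f : E → ℝ) : Prop :=
  ∀ y : E, ∀ g : E →L[ℝ] ℝ, (∀ x, f x ≥ f y + g (x - y)) →
    ∀ x, f x ≥ f y + g (x - y) + lam * breg d x y

/-- Convexity for extended-real-valued functions. -/
def ConvexE {E : Type*} [NormedAddCommGroup E] [NormedSpace ℝ E]
    (h : E → EReal) : Prop :=
  ∀ x y : E, ∀ a b : ℝ, 0 ≤ a → 0 ≤ b → a + b = 1 →
    h (a • x + b • y) ≤ ((a : ℝ) : EReal) * h x + ((b : ℝ) : EReal) * h y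

/-- The lower model `ℓ_f(x; y, lam1)`. -/
def ellf {E : Type*} [NormedAddCommGroup E] [NormedSpace ℝ E]
    (d : E → ℝ) (f : E → ℝ) (lam1 : ℝ) (x y : E) : ℝ :=
  f y + fderiv ℝ f y (x - y) + lam1 * breg d x y



lemma grad_ineq {E : Type*} [NormedAddCommGroup E] [NormedSpace ℝ E]
    (f : E → ℝ) (hfconv : ConvexOn ℝ Set.univ f) (hfdiff : Differentiable ℝ f)
    (x y : E) : f y + fderiv ℝ f y (x - y) ≤ f x := by
  set v := x - y with hv
  set φ : ℝ → ℝ := fun t => f (y + t • v) with hφ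
  have hder : HasDerivAt φ (fderiv ℝ f y v) 0 := by
    have h1 : HasDerivAt (fun t : ℝ => y + t • v) v 0 := by
      simpa using ((hasDerivAt_id (0:ℝ)).smul_const v).const_add y
    have h2 := (hfdiff (y + (0:ℝ) • v)).hasFDerivAt.comp_hasDerivAt 0 h1
    exact (by simpa using h2 : HasDerivAt (f ∘ fun t : ℝ => y + t • v) (fderiv ℝ f y v) 0)
  have hslope : Filter.Tendsto (slope φ 0) (nhdsWithin 0 (Set.Ioi 0))
      (nhds (fderiv ℝ f y v)) :=
    (hasDerivAt_iff_tendsto_slope.mp hder).mono_left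
      (nhdsWithin_mono 0 (fun t ht => ne_of_gt ht : Set.Ioi (0:ℝ) ⊆ {(0:ℝ)}ᶜ))
  have hub : ∀ᶠ t in nhdsWithin (0:ℝ) (Set.Ioi 0), slope φ 0 t ≤ f x - f y := by
    filter_upwards [Ioc_mem_nhdsGT_of_mem (Set.left_mem_Ico.mpr one_pos)] with t ht
    have h1 : φ t ≤ (1 - t) * f y + t * f x := by
      have h2 := hfconv.2 (Set.mem_univ y) (Set.mem_univ x)
        (by linarith [ht.2] : (0:ℝ) ≤ 1 - t) (le_of_lt ht.1) (by ring)
      have h3 : y + t • (x - y) = (1-t) • y + t • x := by module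
      simpa [hφ, hv, h3, smul_eq_mul] using h2
    have h0 : φ 0 = f y := by simp [hφ]
    rw [slope_def_field, h0]
    rw [div_le_iff₀ (by simpa using ht.1)]
    have := ht.1
    nlinarith
  have := le_of_tendsto hslope hub
  linarith

lemma ereal_coe_sum' {ι : Type*} (s : Finset ι) (g : ι → ℝ) :
    ((∑ i ∈ s, g i : ℝ) : EReal) = ∑ i ∈ s, ((g i : ℝ) : EReal) :=
  map_sum (⟨⟨Real.toEReal, EReal.coe_zero⟩, EReal.coe_add⟩ : ℝ →+ EReal) g s

/-- if `A_k J(x_k) ≤ inf ψ_k`, then `J(x_k) - J(x) ≤ Δ(x, x₀)/A_k` on `dom Ψ`. -/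
theorem stmt5 {E : Type*} [NormedAddCommGroup E] [NormedSpace ℝ E] [FiniteDimensional ℝ E]
    (σ lam1 lam2 L : ℝ) (hσ : 0 < σ) (hlam1 : 0 ≤ lam1) (hlam2 : 0 ≤ lam2)
    (hL : σ * lam1 < L)
    (d : E → ℝ) (hddiff : Differentiable ℝ d) (hdconv : ConvexOn ℝ Set.univ d)
    (hdsc : StrongConvexOnNorm σ d)
    (Ψ : E → EReal) (hΨbot : ∀ x, Ψ x ≠ ⊥) (hΨprop : ∃ x, Ψ x ≠ ⊤)
    (hΨlsc : LowerSemicontinuous Ψ) (hΨconv : ConvexE Ψ) (hΨsc : ScWrtE d lam2 Ψ)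
    (f : E → ℝ) (hfconv : ConvexOn ℝ Set.univ f) (hfdiff : Differentiable ℝ f)
    (hfsc : ScWrtR d lam1 f)
    (hfL : ∀ x y : E, ‖fderiv ℝ f x - fderiv ℝ f y‖ ≤ L * ‖x - y‖)
    (k : ℕ) (hk : 1 ≤ k)
    (x₀ xk : E) (hx₀ : Ψ x₀ ≠ ⊤) (hxk : Ψ xk ≠ ⊤)
    (u : ℕ → E) (hu : ∀ i ∈ Finset.Icc 1 k, Ψ (u i) ≠ ⊤)
    (a : ℕ → ℝ) (ha : ∀ i ∈ Finset.Icc 1 k, 0 ≤ a i)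
    (hA : 0 < ∑ i ∈ Finset.Icc 1 k, a i)
    (hrecur : ((∑ i ∈ Finset.Icc 1 k, a i : ℝ) : EReal) * ((f xk : ℝ) + Ψ xk) ≤
      ⨅ w : E, (((breg d w x₀ : ℝ) : EReal) +
        ∑ i ∈ Finset.Icc 1 k, ((a i : ℝ) : EReal) *
          (Ψ w + ((ellf d f lam1 w (u i) : ℝ) : EReal)))) :
    ∀ w : E, Ψ w ≠ ⊤ →
      ((f xk : ℝ) + Ψ xk) - ((f w : ℝ) + Ψ w) ≤
        ((breg d w x₀ / (∑ i ∈ Finset.Icc 1 k, a i) : ℝ) : EReal) := by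
  intro w hw
  set A := ∑ i ∈ Finset.Icc 1 k, a i with hAdef
  set pk := (Ψ xk).toReal with hpkdef
  have hpk : Ψ xk = ((pk : ℝ) : EReal) := (EReal.coe_toReal hxk (hΨbot xk)).symm
  set pw := (Ψ w).toReal with hpwdef
  have hpw : Ψ w = ((pw : ℝ) : EReal) := (EReal.coe_toReal hw (hΨbot w)).symm
  have hinf := le_trans hrecur (iInf_le _ w)
  rw [hpk, hpw] at hinf
  -- convert to a real inequality
  have hreal : A * (f xk + pk) ≤ breg d w x₀ +
      ∑ i ∈ Finset.Icc 1 k, a i * (pw + ellf d f lam1 w (u i)) := by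
    have : ((A * (f xk + pk) : ℝ) : EReal) ≤
        ((breg d w x₀ + ∑ i ∈ Finset.Icc 1 k, a i * (pw + ellf d f lam1 w (u i)) : ℝ) : EReal) := by
      push_cast [ereal_coe_sum']
      convert hinf using 2
    exact_mod_cast this
  -- ellf ≤ f w
  have hell : ∀ i ∈ Finset.Icc 1 k, ellf d f lam1 w (u i) ≤ f w := by
    intro i _hi
    have hg : ∀ z, f z ≥ f (u i) + fderiv ℝ f (u i) (z - u i) := fun z =>
      grad_ineq f hfconv hfdiff z (u i)
    have := hfsc (u i) (fderiv ℝ f (u i)) hg w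
    simp only [ellf]
    linarith
  have hsum : ∑ i ∈ Finset.Icc 1 k, a i * (pw + ellf d f lam1 w (u i)) ≤
      ∑ i ∈ Finset.Icc 1 k, a i * (pw + f w) := by
    apply Finset.sum_le_sum
    intro i hi
    exact mul_le_mul_of_nonneg_left (by linarith [hell i hi]) (ha i hi)
  rw [← Finset.sum_mul] at hsum
  have hkey : A * (f xk + pk) ≤ breg d w x₀ + A * (pw + f w) := by
    calc A * (f xk + pk) ≤ _ := hreal
      _ ≤ breg d w x₀ + A * (pw + f w) := by
          have : (∑ i ∈ Finset.Icc 1 k, a i) * (pw + f w) = A * (pw + f w) := by rw [hAdef]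
          linarith [hsum, this]
  have hfinal : (f xk + pk) - (f w + pw) ≤ breg d w x₀ / A := by
    rw [le_div_iff₀ hA]
    nlinarith [hA]
  rw [hpk, hpw]
  have hcast : (((f xk : ℝ) : EReal) + ((pk : ℝ) : EReal)) - (((f w : ℝ) : EReal) + ((pw : ℝ) : EReal))
      = (((f xk + pk) - (f w + pw) : ℝ) : EReal) := by
    push_cast
    rfl
  rw [hcast]
  exact_mod_cast hfinal
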